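/- Let $b > 1$, let $K \subseteq \mathbb{R}^{d-1}$ be compact and convex, and let $\Pi \subseteq \mathbb{R}^d$ be the convex hull of $(K \times \{-1\}) \cup \{(0, \ldots, 0, b)\}$. Then the closed Euclidean unit ball $\overline{\mathbb{B}}_{2,d}$ is contained in $\Pi$ if and only if $\sqrt{\frac{b+1}{b-1}} \cdot \overline{\mathbb{B}}_{2,d-1} \subseteq K$. -/

import Mathlib

open Pointwise

private def esnoc {d : ℕ} (x : EuclideanSpace ℝ (Fin d)) (t : ℝ) :
    EuclideanSpace ℝ (Fin (d + 1)) :=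
  WithLp.toLp 2 (Fin.snoc (WithLp.ofLp x) t : Fin (d + 1) → ℝ)

@[simp] private lemma esnoc_castSucc {d : ℕ} (x : EuclideanSpace ℝ (Fin d)) (t : ℝ)
    (i : Fin d) : esnoc x t i.castSucc = x i := by
  simp [esnoc]

@[simp] private lemma esnoc_last {d : ℕ} (x : EuclideanSpace ℝ (Fin d)) (t : ℝ) :
    esnoc x t (Fin.last d) = t := by
  simp [esnoc]

private lemma snoc_norm_sq {d : ℕ} (x : EuclideanSpace ℝ (Fin d)) (t : ℝ) :
    ‖esnoc x t‖ ^ 2 = ‖x‖ ^ 2 + t ^ 2 := by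
  have h1 := EuclideanSpace.norm_eq (esnoc x t)
  have h2 := EuclideanSpace.norm_eq x
  rw [h1, h2, Real.sq_sqrt (by positivity), Real.sq_sqrt (by positivity),
    Fin.sum_univ_castSucc]
  simp [sq_abs]

set_option maxHeartbeats 1000000 in
/-- **Simplex-over-a-base containment criterion.**
Let `b > 1`, let `K ⊆ ℝ^d` be compact and convex, and let `Π ⊆ ℝ^(d+1)` be the convex
hull of `K × {-1}` together with the point `(0, …, 0, b)`.  Then the closed Euclidean
unit ball of `ℝ^(d+1)` is contained in `Π` if and only if
`√((b+1)/(b-1)) · B̄(0,1) ⊆ K` in `ℝ^d`. -/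
theorem unitBall_subset_cone_iff {d : ℕ} {b : ℝ} (hb : 1 < b)
    (K : Set (EuclideanSpace ℝ (Fin d))) (hKcpt : IsCompact K) (hKconv : Convex ℝ K) :
    Metric.closedBall (0 : EuclideanSpace ℝ (Fin (d + 1))) 1 ⊆
      convexHull ℝ
        ((fun x : EuclideanSpace ℝ (Fin d) =>
            (WithLp.toLp 2 (Fin.snoc (WithLp.ofLp x) (-1) : Fin (d + 1) → ℝ) : EuclideanSpace ℝ (Fin (d + 1)))) '' K ∪
          {(WithLp.toLp 2 (Fin.snoc (0 : Fin d → ℝ) b : Fin (d + 1) → ℝ) : EuclideanSpace ℝ (Fin (d + 1)))}) ↔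
      Real.sqrt ((b + 1) / (b - 1)) •
          Metric.closedBall (0 : EuclideanSpace ℝ (Fin d)) 1 ⊆ K := by
  have hb0 : (0:ℝ) < b := by linarith
  have hb1 : (0:ℝ) < b - 1 := by linarith
  have hb2 : (0:ℝ) < b + 1 := by linarith
  have hbne : b ≠ 0 := ne_of_gt hb0
  set r : ℝ := Real.sqrt ((b + 1) / (b - 1)) with hrdef
  have hrpos : 0 < r := Real.sqrt_pos.mpr (by positivity)
  have hr2 : r ^ 2 = (b + 1) / (b - 1) := Real.sq_sqrt (by positivity)
  set f : EuclideanSpace ℝ (Fin d) → EuclideanSpace ℝ (Fin (d + 1)) :=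
    fun x => (WithLp.toLp 2 (Fin.snoc (WithLp.ofLp x) (-1) : Fin (d + 1) → ℝ) : EuclideanSpace ℝ (Fin (d + 1))) with hf
  set p : EuclideanSpace ℝ (Fin (d + 1)) :=
    (WithLp.toLp 2 (Fin.snoc (0 : Fin d → ℝ) b : Fin (d + 1) → ℝ) : EuclideanSpace ℝ (Fin (d + 1))) with hp
  rcases K.eq_empty_or_nonempty with hK | hK
  · subst hK
    constructor
    · intro h
      exfalso
      have h0 := h (Metric.mem_closedBall_self zero_le_one)
      simp only [Set.image_empty, Set.empty_union, convexHull_singleton,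
        Set.mem_singleton_iff] at h0
      have h1 : (0 : EuclideanSpace ℝ (Fin (d + 1))) (Fin.last d) = p (Fin.last d) := by
        rw [h0]
      rw [hp] at h1
      simp at h1
      linarith
    · intro h
      exfalso
      have h0 : (0 : EuclideanSpace ℝ (Fin d)) ∈
          r • Metric.closedBall (0 : EuclideanSpace ℝ (Fin d)) 1 :=
        ⟨0, Metric.mem_closedBall_self zero_le_one, smul_zero r⟩
      exact absurd (h h0) (by simp)
  · have hfA : Convex ℝ (f '' K) := by
      intro u hu v hv a c ha hc hac
      obtain ⟨xu, hxu, rfl⟩ := hu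
      obtain ⟨xv, hxv, rfl⟩ := hv
      refine ⟨a • xu + c • xv, hKconv hxu hxv ha hc hac, ?_⟩
      ext i
      induction i using Fin.lastCases with
      | last =>
        simp only [hf, PiLp.add_apply, PiLp.smul_apply, Fin.snoc_last, smul_eq_mul]
        linarith
      | cast i =>
        simp [hf, PiLp.add_apply, PiLp.smul_apply, Fin.snoc_castSucc]
    constructor
    · -- ball ⊆ cone → r • ball ⊆ K
      intro h y hy
      obtain ⟨w, hw, hwy⟩ := Set.mem_smul_set.mp hy
      have hwn : ‖w‖ ≤ 1 := by simpa using hw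
      have hyn : ‖y‖ ≤ r := by
        rw [← hwy, norm_smul, Real.norm_eq_abs, abs_of_pos hrpos]
        nlinarith [norm_nonneg w]
      set x : EuclideanSpace ℝ (Fin d) := ((b - 1) / b) • y with hxdef
      have hz : esnoc x (1 / b) ∈
          Metric.closedBall (0 : EuclideanSpace ℝ (Fin (d + 1))) 1 := by
        rw [mem_closedBall_zero_iff]
        have hxn : ‖x‖ = (b - 1) / b * ‖y‖ := by
          rw [hxdef, norm_smul, Real.norm_eq_abs, abs_of_pos (by positivity)]
        have h1 : ‖esnoc x (1 / b)‖ ^ 2 ≤ 1 := by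
          rw [snoc_norm_sq, hxn]
          have key : ((b - 1) / b) ^ 2 * r ^ 2 + (1 / b) ^ 2 = 1 := by
            rw [hr2]; field_simp; ring
          have hy2 : ‖y‖ ^ 2 ≤ r ^ 2 := by nlinarith [norm_nonneg y]
          have h3 : ((b - 1) / b * ‖y‖) ^ 2 ≤ ((b - 1) / b) ^ 2 * r ^ 2 := by
            rw [mul_pow]
            exact mul_le_mul_of_nonneg_left hy2 (sq_nonneg _)
          linarith [key, h3]
        nlinarith [norm_nonneg (esnoc x (1 / b))]
      have hz2 := h hz
      rw [Set.union_singleton, convexHull_insert (hK.image f), hfA.convexHull_eq,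
        mem_convexJoin] at hz2
      obtain ⟨q, hq, wv, hwv, hseg⟩ := hz2
      rw [Set.mem_singleton_iff] at hq
      subst hq
      obtain ⟨k, hkK, rfl⟩ := hwv
      obtain ⟨α, β, hα, hβ, hαβ, heq⟩ := hseg
      have hlast : α * b + β * (-1) = 1 / b := by
        have h1 := congrArg
          (fun v : EuclideanSpace ℝ (Fin (d + 1)) => v (Fin.last d)) heq
        simpa [hf, hp, PiLp.add_apply, PiLp.smul_apply] using h1
      have hl2 : (α * b + β * (-1)) * b = 1 := by rw [hlast]; field_simp
      have hβ' : β * b * (1 + b) = (b - 1) * (1 + b) := by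
        linear_combination (-1 : ℝ) * hl2 + (b * b) * hαβ
      have hβv : β = (b - 1) / b := by
        rw [eq_div_iff hbne]
        exact mul_right_cancel₀ (by positivity) hβ'
      have hcoord : ∀ i : Fin d, β * k i = x i := by
        intro i
        have h1 := congrArg
          (fun v : EuclideanSpace ℝ (Fin (d + 1)) => v (i.castSucc)) heq
        simpa [hf, hp, PiLp.add_apply, PiLp.smul_apply] using h1
      have hyk : y = k := by
        ext i
        have h1 := hcoord i
        have hx : x i = (b - 1) / b * y i := by
          rw [hxdef]; simp [PiLp.smul_apply]
        rw [hβv, hx] at h1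
        have hc : (b - 1) / b ≠ 0 := by positivity
        exact (mul_left_cancel₀ hc h1).symm
      rw [hyk]; exact hkK
    · -- r • ball ⊆ K → ball ⊆ cone
      intro h z hz
      obtain ⟨t, htdef⟩ : ∃ t' : ℝ, t' = z (Fin.last d) := ⟨_, rfl⟩
      obtain ⟨x, hxdef⟩ : ∃ x' : EuclideanSpace ℝ (Fin d),
          x' = WithLp.toLp 2 (fun i => z i.castSucc : Fin d → ℝ) := ⟨_, rfl⟩
      have hzx : z = esnoc x t := by
        ext i
        induction i using Fin.lastCases with
        | last => simp [htdef]
        | cast i => simp [hxdef]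
      have hzn : ‖x‖ ^ 2 + t ^ 2 ≤ 1 := by
        have h1 : ‖z‖ ≤ 1 := by simpa using hz
        rw [hzx] at h1
        nlinarith [snoc_norm_sq x t, norm_nonneg (esnoc x t)]
      have ht1 : t ≤ 1 := by nlinarith [sq_nonneg ‖x‖]
      have ht2 : -1 ≤ t := by nlinarith [sq_nonneg ‖x‖]
      obtain ⟨lam, hlamdef⟩ : ∃ l : ℝ, l = (b - t) / (b + 1) := ⟨_, rfl⟩
      have hlpos : 0 < lam := by rw [hlamdef]; exact div_pos (by linarith) hb2
      have hl1 : lam ≤ 1 := by rw [hlamdef, div_le_one hb2]; linarith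
      obtain ⟨k, hkdef⟩ : ∃ k' : EuclideanSpace ℝ (Fin d), k' = lam⁻¹ • x := ⟨_, rfl⟩
      have hxle : ‖x‖ ≤ r * lam := by
        have hsq : (r * lam) ^ 2 = (b - t) ^ 2 / ((b - 1) * (b + 1)) := by
          rw [mul_pow, hr2, hlamdef]
          field_simp
        have h2 : ‖x‖ ^ 2 ≤ (r * lam) ^ 2 := by
          rw [hsq, le_div_iff₀ (by positivity)]
          nlinarith [sq_nonneg (b * t - 1),
            mul_le_mul_of_nonneg_right hzn (show (0:ℝ) ≤ (b - 1) * (b + 1) by positivity)]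
        nlinarith [norm_nonneg x, mul_nonneg hrpos.le hlpos.le]
      have hkn : ‖k‖ ≤ r := by
        have hxk : ‖k‖ = lam⁻¹ * ‖x‖ := by
          rw [hkdef, norm_smul, Real.norm_eq_abs, abs_of_pos (inv_pos.mpr hlpos)]
        rw [hxk]
        have h3 : lam⁻¹ * ‖x‖ ≤ lam⁻¹ * (r * lam) :=
          mul_le_mul_of_nonneg_left hxle (inv_pos.mpr hlpos).le
        have h4 : lam⁻¹ * (r * lam) = r := by field_simp
        linarith [h3, h4.le]
      have hkK : k ∈ K := by
        apply h
        refine ⟨r⁻¹ • k, ?_, ?_⟩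
        · rw [mem_closedBall_zero_iff, norm_smul, Real.norm_eq_abs,
            abs_of_pos (inv_pos.mpr hrpos)]
          have h5 : r⁻¹ * ‖k‖ ≤ r⁻¹ * r :=
            mul_le_mul_of_nonneg_left hkn (inv_pos.mpr hrpos).le
          rw [inv_mul_cancel₀ (ne_of_gt hrpos)] at h5
          exact h5
        · show r • r⁻¹ • k = k
          rw [smul_smul, mul_inv_cancel₀ (ne_of_gt hrpos), one_smul]
      have hpmem : p ∈ f '' K ∪ {p} := Or.inr rfl
      have hmem : f k ∈ f '' K ∪ {p} := Or.inl ⟨k, hkK, rfl⟩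
      refine segment_subset_convexHull hpmem hmem
        ⟨1 - lam, lam, by linarith, hlpos.le, by ring, ?_⟩
      rw [hzx]
      ext i
      induction i using Fin.lastCases with
      | last =>
        simp only [hf, hp, PiLp.add_apply, PiLp.smul_apply, Fin.snoc_last, esnoc_last]
        rw [hlamdef]
        field_simp
        have h1b : (1 + b) ≠ 0 := by linarith
        linear_combination t * (mul_inv_cancel₀ h1b)
      | cast i =>
        simp only [hf, hp, PiLp.add_apply, PiLp.smul_apply, Fin.snoc_castSucc,
          esnoc_castSucc, Pi.zero_apply]
        rw [hkdef]
        simp only [PiLp.smul_apply, smul_eq_mul]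
        field_simp
        ring
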